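/- Let x, y ∈ ℝ^q with all entries in [0, π/2], let v be a unitary q×q complex matrix and w a complex q×q matrix with operator norm ‖w‖ ≤ 1. Set ξ := cos(x̲)·v·cos(y̲) - sin(x̲)·w·sin(y̲), where x̲ = diag(x_1,...,x_q). Then the smallest singular value of ξ satisfies σ_q(ξ) ≥ cos(‖x‖_∞ + ‖y‖_∞), provided ‖x‖_∞ + ‖y‖_∞ ≤ π. -/

import Mathlib

open Real

/-- The largest singular value of a complex q×q matrix: the supremum of ‖Av‖ over
unit vectors v. -/
noncomputable def sMax (q : ℕ) (A : Matrix (Fin q) (Fin q) ℂ) : ℝ :=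
  ⨆ v : Metric.sphere (0 : EuclideanSpace ℂ (Fin q)) 1, ‖Matrix.toEuclideanLin A ↑v‖

/-- The smallest singular value of a complex q×q matrix: the infimum of ‖Av‖ over
unit vectors v. -/
noncomputable def sMin (q : ℕ) (A : Matrix (Fin q) (Fin q) ℂ) : ℝ :=
  ⨅ v : Metric.sphere (0 : EuclideanSpace ℂ (Fin q)) 1, ‖Matrix.toEuclideanLin A ↑v‖

lemma diag_apply_aux (q : ℕ) (d : Fin q → ℝ) (z : EuclideanSpace ℂ (Fin q)) (i : Fin q) :
    (Matrix.toEuclideanCLM (𝕜 := ℂ) (Matrix.diagonal (fun i => (d i : ℂ))) z) i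
      = (d i : ℂ) * z i := by
  have h := Matrix.ofLp_toEuclideanCLM (𝕜 := ℂ)
    (Matrix.diagonal (fun i => (d i : ℂ))) z
  have h2 := congrFun h i
  simpa [Matrix.mulVec_diagonal] using h2

lemma diag_lower_aux (q : ℕ) (d : Fin q → ℝ) (c : ℝ) (hc : 0 ≤ c) (h : ∀ i, c ≤ d i)
    (z : EuclideanSpace ℂ (Fin q)) :
    c * ‖z‖ ≤ ‖Matrix.toEuclideanCLM (𝕜 := ℂ) (Matrix.diagonal (fun i => (d i : ℂ))) z‖ := by
  rw [EuclideanSpace.norm_eq, EuclideanSpace.norm_eq]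
  rw [← Real.sqrt_sq hc, ← Real.sqrt_mul (sq_nonneg c)]
  apply Real.sqrt_le_sqrt
  rw [Finset.mul_sum]
  apply Finset.sum_le_sum
  intro i _
  rw [diag_apply_aux]
  rw [norm_mul, Complex.norm_real, Real.norm_eq_abs, abs_of_nonneg (hc.trans (h i))]
  rw [mul_pow]
  apply mul_le_mul_of_nonneg_right _ (sq_nonneg _)
  exact pow_le_pow_left₀ hc (h i) 2

lemma diag_upper_aux (q : ℕ) (d : Fin q → ℝ) (c : ℝ) (hc : 0 ≤ c) (hd : ∀ i, 0 ≤ d i)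
    (h : ∀ i, d i ≤ c) (z : EuclideanSpace ℂ (Fin q)) :
    ‖Matrix.toEuclideanCLM (𝕜 := ℂ) (Matrix.diagonal (fun i => (d i : ℂ))) z‖ ≤ c * ‖z‖ := by
  rw [EuclideanSpace.norm_eq, EuclideanSpace.norm_eq]
  rw [← Real.sqrt_sq hc, ← Real.sqrt_mul (sq_nonneg c)]
  apply Real.sqrt_le_sqrt
  rw [Finset.mul_sum]
  apply Finset.sum_le_sum
  intro i _
  rw [diag_apply_aux]
  rw [norm_mul, Complex.norm_real, Real.norm_eq_abs, abs_of_nonneg (hd i)]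
  rw [mul_pow]
  apply mul_le_mul_of_nonneg_right _ (sq_nonneg _)
  exact pow_le_pow_left₀ (hd i) (h i) 2

/-- For x, y ∈ [0,π/2]^q, v unitary and ‖w‖ ≤ 1, the smallest singular value of
ξ = cos x̲ · v · cos y̲ - sin x̲ · w · sin y̲ is at least cos(‖x‖_∞ + ‖y‖_∞). -/
theorem sMin_xi_ge (q : ℕ) (hq : 0 < q) (x y : Fin q → ℝ)
    (hx : ∀ i, x i ∈ Set.Icc 0 (π / 2)) (hy : ∀ i, y i ∈ Set.Icc 0 (π / 2))
    (v : Matrix (Fin q) (Fin q) ℂ) (hv : v ∈ Matrix.unitaryGroup (Fin q) ℂ)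
    (w : Matrix (Fin q) (Fin q) ℂ) (hw : sMax q w ≤ 1)
    (hsum : ‖x‖ + ‖y‖ ≤ π) :
    Real.cos (‖x‖ + ‖y‖) ≤
      sMin q (Matrix.diagonal (fun i => (Real.cos (x i) : ℂ)) * v *
          Matrix.diagonal (fun i => (Real.cos (y i) : ℂ)) -
        Matrix.diagonal (fun i => (Real.sin (x i) : ℂ)) * w *
          Matrix.diagonal (fun i => (Real.sin (y i) : ℂ))) := by
  have pi_pos := Real.pi_pos
  set a := ‖x‖ with ha_def
  set b := ‖y‖ with hb_def
  have ha0 : 0 ≤ a := norm_nonneg _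
  have hb0 : 0 ≤ b := norm_nonneg _
  have ha2 : a ≤ π / 2 := by
    rw [ha_def]
    refine (pi_norm_le_iff_of_nonneg (by positivity)).2 fun i => ?_
    rw [Real.norm_eq_abs, abs_of_nonneg (hx i).1]; exact (hx i).2
  have hb2 : b ≤ π / 2 := by
    rw [hb_def]
    refine (pi_norm_le_iff_of_nonneg (by positivity)).2 fun i => ?_
    rw [Real.norm_eq_abs, abs_of_nonneg (hy i).1]; exact (hy i).2
  have hxa : ∀ i, x i ≤ a := fun i => by
    have := norm_le_pi_norm x i
    rw [Real.norm_eq_abs] at this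
    exact (le_abs_self _).trans this
  have hyb : ∀ i, y i ≤ b := fun i => by
    have := norm_le_pi_norm y i
    rw [Real.norm_eq_abs] at this
    exact (le_abs_self _).trans this
  have hcosa : 0 ≤ Real.cos a := Real.cos_nonneg_of_mem_Icc ⟨by linarith, ha2⟩
  have hcosb : 0 ≤ Real.cos b := Real.cos_nonneg_of_mem_Icc ⟨by linarith, hb2⟩
  have hsina : 0 ≤ Real.sin a := Real.sin_nonneg_of_nonneg_of_le_pi ha0 (by linarith)
  have hsinb : 0 ≤ Real.sin b := Real.sin_nonneg_of_nonneg_of_le_pi hb0 (by linarith)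
  have hcosx : ∀ i, Real.cos a ≤ Real.cos (x i) := fun i =>
    Real.cos_le_cos_of_nonneg_of_le_pi (hx i).1 (by linarith) (hxa i)
  have hcosy : ∀ i, Real.cos b ≤ Real.cos (y i) := fun i =>
    Real.cos_le_cos_of_nonneg_of_le_pi (hy i).1 (by linarith) (hyb i)
  have hsinx : ∀ i, Real.sin (x i) ≤ Real.sin a := fun i =>
    Real.sin_le_sin_of_le_of_le_pi_div_two (by linarith [(hx i).1]) ha2 (hxa i)
  have hsiny : ∀ i, Real.sin (y i) ≤ Real.sin b := fun i =>
    Real.sin_le_sin_of_le_of_le_pi_div_two (by linarith [(hy i).1]) hb2 (hyb i)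
  have hsinx0 : ∀ i, 0 ≤ Real.sin (x i) := fun i =>
    Real.sin_nonneg_of_nonneg_of_le_pi (hx i).1 (by linarith [(hx i).2])
  have hsiny0 : ∀ i, 0 ≤ Real.sin (y i) := fun i =>
    Real.sin_nonneg_of_nonneg_of_le_pi (hy i).1 (by linarith [(hy i).2])
  -- the unitary CLM
  have hvU : Matrix.toEuclideanCLM (𝕜 := ℂ) v ∈
      unitary (EuclideanSpace ℂ (Fin q) →L[ℂ] EuclideanSpace ℂ (Fin q)) := by
    constructor
    · rw [← map_star, ← map_mul, Unitary.star_mul_self_of_mem hv, map_one]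
    · rw [← map_star, ← map_mul, Unitary.mul_star_self_of_mem hv, map_one]
  -- w is a contraction
  have hwle : ∀ z : EuclideanSpace ℂ (Fin q), ‖Matrix.toEuclideanCLM (𝕜 := ℂ) w z‖ ≤ ‖z‖ := by
    intro z
    rcases eq_or_ne z 0 with rfl | hz
    · simp
    · have hzn : 0 < ‖z‖ := norm_pos_iff.2 hz
      set u0 : EuclideanSpace ℂ (Fin q) := ((‖z‖ : ℂ)⁻¹) • z with hu0_def
      have hu0 : ‖u0‖ = 1 := by
        rw [hu0_def, norm_smul, norm_inv, Complex.norm_real, Real.norm_eq_abs,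
          abs_of_nonneg (norm_nonneg z), inv_mul_cancel₀ hzn.ne']
      have hmem : u0 ∈ Metric.sphere (0 : EuclideanSpace ℂ (Fin q)) 1 :=
        mem_sphere_zero_iff_norm.2 hu0
      have hbdd : BddAbove (Set.range fun s : Metric.sphere (0 : EuclideanSpace ℂ (Fin q)) 1 =>
          ‖Matrix.toEuclideanLin w ↑s‖) := by
        refine ⟨‖Matrix.toEuclideanCLM (𝕜 := ℂ) w‖, ?_⟩
        rintro r ⟨⟨s, hs⟩, rfl⟩
        have hs1 : ‖s‖ = 1 := mem_sphere_zero_iff_norm.1 hs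
        calc ‖Matrix.toEuclideanLin w s‖ = ‖Matrix.toEuclideanCLM (𝕜 := ℂ) w s‖ := rfl
          _ ≤ ‖Matrix.toEuclideanCLM (𝕜 := ℂ) w‖ * ‖s‖ :=
            (Matrix.toEuclideanCLM (𝕜 := ℂ) w).le_opNorm s
          _ = ‖Matrix.toEuclideanCLM (𝕜 := ℂ) w‖ := by rw [hs1, mul_one]
      have h1 : ‖Matrix.toEuclideanLin w u0‖ ≤ sMax q w :=
        le_ciSup hbdd (⟨u0, hmem⟩ : Metric.sphere (0 : EuclideanSpace ℂ (Fin q)) 1)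
      have h2 : Matrix.toEuclideanCLM (𝕜 := ℂ) w z = (‖z‖ : ℂ) • Matrix.toEuclideanCLM (𝕜 := ℂ) w u0 := by
        rw [hu0_def, map_smul, smul_smul, mul_inv_cancel₀ (by exact_mod_cast hzn.ne'), one_smul]
      calc ‖Matrix.toEuclideanCLM (𝕜 := ℂ) w z‖
          = ‖z‖ * ‖Matrix.toEuclideanCLM (𝕜 := ℂ) w u0‖ := by
            rw [h2, norm_smul, Complex.norm_real, Real.norm_eq_abs, abs_of_nonneg (norm_nonneg z)]
        _ ≤ ‖z‖ * 1 := by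
            apply mul_le_mul_of_nonneg_left _ (norm_nonneg z)
            exact le_trans h1 hw
        _ = ‖z‖ := mul_one _
  have hne : Nonempty (Metric.sphere (0 : EuclideanSpace ℂ (Fin q)) 1) :=
    ⟨⟨EuclideanSpace.single ⟨0, hq⟩ (1 : ℂ), mem_sphere_zero_iff_norm.2 (by
      simp [EuclideanSpace.norm_single])⟩⟩
  rw [sMin]
  apply le_ciInf
  rintro ⟨u, hu⟩
  have hu1 : ‖u‖ = 1 := mem_sphere_zero_iff_norm.1 hu
  have key : ∀ (A : Matrix (Fin q) (Fin q) ℂ) (z : EuclideanSpace ℂ (Fin q)),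
      Matrix.toEuclideanLin A z = Matrix.toEuclideanCLM (𝕜 := ℂ) A z := fun A z => rfl
  have hA : Real.cos a * Real.cos b ≤
      ‖Matrix.toEuclideanCLM (𝕜 := ℂ) (Matrix.diagonal (fun i => (Real.cos (x i) : ℂ)) * v *
        Matrix.diagonal (fun i => (Real.cos (y i) : ℂ))) u‖ := by
    rw [map_mul, map_mul, ContinuousLinearMap.mul_apply, ContinuousLinearMap.mul_apply]
    calc Real.cos a * Real.cos b = Real.cos a * (Real.cos b * ‖u‖) := by rw [hu1, mul_one]
      _ ≤ Real.cos a * ‖Matrix.toEuclideanCLM (𝕜 := ℂ)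
            (Matrix.diagonal (fun i => (Real.cos (y i) : ℂ))) u‖ :=
          mul_le_mul_of_nonneg_left (diag_lower_aux q _ _ hcosb hcosy u) hcosa
      _ = Real.cos a * ‖Matrix.toEuclideanCLM (𝕜 := ℂ) v (Matrix.toEuclideanCLM (𝕜 := ℂ)
            (Matrix.diagonal (fun i => (Real.cos (y i) : ℂ))) u)‖ := by
          rw [ContinuousLinearMap.norm_map_of_mem_unitary hvU]
      _ ≤ _ := diag_lower_aux q _ _ hcosa hcosx _
  have hB : ‖Matrix.toEuclideanCLM (𝕜 := ℂ) (Matrix.diagonal (fun i => (Real.sin (x i) : ℂ)) * w *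
        Matrix.diagonal (fun i => (Real.sin (y i) : ℂ))) u‖ ≤ Real.sin a * Real.sin b := by
    rw [map_mul, map_mul, ContinuousLinearMap.mul_apply, ContinuousLinearMap.mul_apply]
    calc ‖Matrix.toEuclideanCLM (𝕜 := ℂ) (Matrix.diagonal (fun i => (Real.sin (x i) : ℂ)))
          (Matrix.toEuclideanCLM (𝕜 := ℂ) w (Matrix.toEuclideanCLM (𝕜 := ℂ)
            (Matrix.diagonal (fun i => (Real.sin (y i) : ℂ))) u))‖
        ≤ Real.sin a * ‖Matrix.toEuclideanCLM (𝕜 := ℂ) w (Matrix.toEuclideanCLM (𝕜 := ℂ)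
            (Matrix.diagonal (fun i => (Real.sin (y i) : ℂ))) u)‖ :=
          diag_upper_aux q _ _ hsina hsinx0 hsinx _
      _ ≤ Real.sin a * ‖Matrix.toEuclideanCLM (𝕜 := ℂ)
            (Matrix.diagonal (fun i => (Real.sin (y i) : ℂ))) u‖ :=
          mul_le_mul_of_nonneg_left (hwle _) hsina
      _ ≤ Real.sin a * (Real.sin b * ‖u‖) :=
          mul_le_mul_of_nonneg_left (diag_upper_aux q _ _ hsinb hsiny0 hsiny u) hsina
      _ = Real.sin a * Real.sin b := by rw [hu1, mul_one]
  rw [Real.cos_add]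
  calc Real.cos a * Real.cos b - Real.sin a * Real.sin b
      ≤ ‖Matrix.toEuclideanCLM (𝕜 := ℂ) (Matrix.diagonal (fun i => (Real.cos (x i) : ℂ)) * v *
          Matrix.diagonal (fun i => (Real.cos (y i) : ℂ))) u‖ -
        ‖Matrix.toEuclideanCLM (𝕜 := ℂ) (Matrix.diagonal (fun i => (Real.sin (x i) : ℂ)) * w *
          Matrix.diagonal (fun i => (Real.sin (y i) : ℂ))) u‖ := sub_le_sub hA hB
    _ ≤ ‖Matrix.toEuclideanCLM (𝕜 := ℂ) (Matrix.diagonal (fun i => (Real.cos (x i) : ℂ)) * v *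
          Matrix.diagonal (fun i => (Real.cos (y i) : ℂ))) u -
        Matrix.toEuclideanCLM (𝕜 := ℂ) (Matrix.diagonal (fun i => (Real.sin (x i) : ℂ)) * w *
          Matrix.diagonal (fun i => (Real.sin (y i) : ℂ))) u‖ := norm_sub_norm_le _ _
    _ = _ := by rw [key, map_sub, ContinuousLinearMap.sub_apply]
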